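/- (Input-to-state stability of the constant-metric closed loop.) Let f : ℝⁿ → ℝⁿ be continuously differentiable with Jacobian A(x), B an n×m real matrix, W symmetric positive definite, λ > 0, ρ ≥ 0, with W·A(x)ᵀ + A(x)·W - ρ·B·Bᵀ ⪯ -2λW for all x, and K = -(ρ/2)·Bᵀ·W⁻¹; set M = W⁻¹. Let u⋆ : [0,∞) → ℝᵐ be continuous, x⋆ a solution of ẋ⋆ = f(x⋆) + B·u⋆(t), w : [0,∞) → ℝⁿ a continuous disturbance, and x a solution of ẋ = f(x) + B·(u⋆(t) + K·(x - x⋆(t))) + w(t). Then V(t) := √((x(t)-x⋆(t))ᵀ·M·(x(t)-x⋆(t))) satisfies V(t) ≤ e^{-λt}·V(0) + ∫₀ᵗ e^{-λ(t-s)}·√(w(s)ᵀ·M·w(s)) ds for all t ≥ 0. -/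

import Mathlib

open Matrix

/-- Cauchy–Schwarz for the dot product on `Fin n → ℝ`. -/
lemma iss_dot_cs {n : ℕ} (u v : Fin n → ℝ) :
    u ⬝ᵥ v ≤ Real.sqrt (u ⬝ᵥ u) * Real.sqrt (v ⬝ᵥ v) := by
  have := Real.sum_mul_le_sqrt_mul_sqrt Finset.univ u v
  simpa [dotProduct, sq] using this

/-- Cauchy–Schwarz for a positive semidefinite bilinear form. -/
lemma iss_psd_cs {n : ℕ} {M : Matrix (Fin n) (Fin n) ℝ} (hM : M.PosSemidef)
    (a b : Fin n → ℝ) :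
    a ⬝ᵥ M.mulVec b ≤ Real.sqrt (a ⬝ᵥ M.mulVec a) * Real.sqrt (b ⬝ᵥ M.mulVec b) := by
  obtain ⟨L, rfl⟩ : ∃ L : Matrix (Fin n) (Fin n) ℝ, M = Lᴴ * L := by
    open scoped MatrixOrder in
    exact CStarAlgebra.nonneg_iff_eq_star_mul_self.mp hM.nonneg
  have hL : Lᴴ = Lᵀ := rfl
  rw [hL]
  have key : ∀ c d : Fin n → ℝ, c ⬝ᵥ (Lᵀ * L).mulVec d = (L.mulVec c) ⬝ᵥ (L.mulVec d) := by
    intro c d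
    rw [← Matrix.mulVec_mulVec, Matrix.dotProduct_mulVec, Matrix.vecMul_transpose]
  rw [key, key, key]
  exact iss_dot_cs _ _

/-- Pointwise consequence of the LMI. -/
lemma iss_lmi_pointwise {n m : ℕ} (W A₀ : Matrix (Fin n) (Fin n) ℝ)
    (B : Matrix (Fin n) (Fin m) ℝ) (hW : W.PosDef) (lam ρ : ℝ)
    (h : ((-(2 * lam)) • W - (W * A₀ᵀ + A₀ * W - ρ • (B * Bᵀ))).PosSemidef)
    (e : Fin n → ℝ) :
    e ⬝ᵥ W⁻¹.mulVec (A₀.mulVec e) ≤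
      -lam * (e ⬝ᵥ W⁻¹.mulVec e) +
        (ρ / 2) * ((Bᵀ.mulVec (W⁻¹.mulVec e)) ⬝ᵥ (Bᵀ.mulVec (W⁻¹.mulVec e))) := by
  set M := W⁻¹ with hMdef
  have hWsym : Wᵀ = W := hW.1
  have hMsym : Mᵀ = M := by
    rw [hMdef, Matrix.transpose_nonsing_inv, hWsym]
  have hdet : IsUnit W.det := hW.det_pos.ne'.isUnit
  have hWM : W * M = 1 := Matrix.mul_nonsing_inv W hdet
  set v := M.mulVec e with hvdef
  have hWv : W.mulVec v = e := by
    rw [hvdef, Matrix.mulVec_mulVec, hWM, Matrix.one_mulVec]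
  have h0 := h.dotProduct_mulVec_nonneg v
  simp only [star_trivial, RCLike.re_to_real] at h0
  have hvW : v ᵥ* W = e := by rw [← hWsym, Matrix.vecMul_transpose, hWv]
  have expand : v ⬝ᵥ ((-(2 * lam)) • W - (W * A₀ᵀ + A₀ * W - ρ • (B * Bᵀ))).mulVec v
      = (-(2 * lam)) * (e ⬝ᵥ v) - (2 * (v ⬝ᵥ A₀.mulVec e)
          - ρ * ((Bᵀ.mulVec v) ⬝ᵥ (Bᵀ.mulVec v))) := by
    have t1 : v ⬝ᵥ W.mulVec v = e ⬝ᵥ v := by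
      rw [Matrix.dotProduct_mulVec, hvW]
    have t2 : v ⬝ᵥ (W * A₀ᵀ).mulVec v = v ⬝ᵥ A₀.mulVec e := by
      rw [← Matrix.mulVec_mulVec, Matrix.dotProduct_mulVec, hvW,
        Matrix.dotProduct_mulVec, show e ᵥ* A₀ᵀ = A₀ *ᵥ e from Matrix.vecMul_transpose ..,
        dotProduct_comm]
    have t3 : v ⬝ᵥ (A₀ * W).mulVec v = v ⬝ᵥ A₀.mulVec e := by
      rw [← Matrix.mulVec_mulVec, hWv]
    have t4 : v ⬝ᵥ (ρ • (B * Bᵀ)).mulVec v = ρ * ((Bᵀ.mulVec v) ⬝ᵥ (Bᵀ.mulVec v)) := by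
      rw [Matrix.smul_mulVec, dotProduct_smul, ← Matrix.mulVec_mulVec,
        Matrix.dotProduct_mulVec, show v ᵥ* B = Bᵀ *ᵥ v from (Matrix.mulVec_transpose B v).symm]
      simp
    simp only [Matrix.sub_mulVec, Matrix.add_mulVec, dotProduct_sub,
      dotProduct_add, t1, t2, t3, t4]
    have t5 : v ⬝ᵥ ((-(2 * lam)) • W).mulVec v = (-(2 * lam)) * (e ⬝ᵥ v) := by
      rw [Matrix.smul_mulVec, dotProduct_smul, t1]; simp
    rw [t5]; ring
  rw [expand] at h0
  have hgoal1 : e ⬝ᵥ M.mulVec (A₀.mulVec e) = v ⬝ᵥ A₀.mulVec e := by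
    rw [Matrix.dotProduct_mulVec, show e ᵥ* M = Mᵀ *ᵥ e from (Matrix.mulVec_transpose M e).symm,
      hMsym]
  have hgoal2 : e ⬝ᵥ M.mulVec e = e ⬝ᵥ v := rfl
  rw [hgoal1, hgoal2]
  linarith

/-- The contraction inequality along the segment between two points. -/
lemma iss_contraction_ineq {n m : ℕ}
    (f : (Fin n → ℝ) → (Fin n → ℝ))
    (A : (Fin n → ℝ) → Matrix (Fin n) (Fin n) ℝ)
    (hf : ∀ x : Fin n → ℝ,
      HasFDerivAt f ((Matrix.toLin' (A x)).toContinuousLinearMap) x)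
    (B : Matrix (Fin n) (Fin m) ℝ)
    (W : Matrix (Fin n) (Fin n) ℝ) (hW : W.PosDef)
    (lam ρ : ℝ)
    (hLMI : ∀ x : Fin n → ℝ,
      ((-(2 * lam)) • W - (W * (A x)ᵀ + A x * W - ρ • (B * Bᵀ))).PosSemidef)
    (K : Matrix (Fin m) (Fin n) ℝ) (hK : K = (-(ρ / 2)) • (Bᵀ * W⁻¹))
    (a b : Fin n → ℝ) :
    (a - b) ⬝ᵥ W⁻¹.mulVec (f a - f b + B.mulVec (K.mulVec (a - b))) ≤
      -lam * ((a - b) ⬝ᵥ W⁻¹.mulVec (a - b)) := by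
  set M := W⁻¹ with hMdef
  have hWsym : Wᵀ = W := hW.1
  have hMsym : Mᵀ = M := by rw [hMdef, Matrix.transpose_nonsing_inv, hWsym]
  set e := a - b with hedef
  set v := M.mulVec e with hvdef
  have hvM : e ᵥ* M = v := by
    rw [show e ᵥ* M = Mᵀ *ᵥ e from (Matrix.mulVec_transpose M e).symm, hMsym]
  set z := Bᵀ.mulVec v with hzdef
  set C : ℝ := -lam * (e ⬝ᵥ v) + (ρ / 2) * (z ⬝ᵥ z) with hCdef
  set γ : ℝ → (Fin n → ℝ) := fun s => b + s • e with hγdef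
  have hγd : ∀ s : ℝ, HasDerivAt γ e s := by
    intro s
    have := ((hasDerivAt_id s).smul_const e).const_add b
    simp only [one_smul] at this; exact this
  set ψ : ℝ → ℝ := fun s => v ⬝ᵥ f (γ s) with hψdef
  have hψd : ∀ s : ℝ, HasDerivAt ψ (v ⬝ᵥ (A (γ s)).mulVec e) s := by
    intro s
    have hF : HasDerivAt (fun s => f (γ s)) ((A (γ s)).mulVec e) s := by
      have := (hf (γ s)).comp_hasDerivAt s (hγd s)
      simp [Matrix.toLin'_apply] at this; exact this
    have : ∀ i, HasDerivAt (fun s => f (γ s) i) ((A (γ s)).mulVec e i) s :=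
      hasDerivAt_pi.1 hF
    have hsum : HasDerivAt (fun s => ∑ i, v i * f (γ s) i)
        (∑ i, v i * (A (γ s)).mulVec e i) s :=
      HasDerivAt.fun_sum (fun i _ => (this i).const_mul (v i))
    simpa [hψdef, dotProduct] using hsum
  have hbound : ∀ s : ℝ, v ⬝ᵥ (A (γ s)).mulVec e ≤ C := by
    intro s
    have h1 := iss_lmi_pointwise W (A (γ s)) B hW lam ρ (hLMI (γ s)) e
    have h2 : e ⬝ᵥ M.mulVec ((A (γ s)).mulVec e) = v ⬝ᵥ (A (γ s)).mulVec e := by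
      rw [Matrix.dotProduct_mulVec, hvM]
    rw [← hMdef] at h1
    rw [h2] at h1
    exact h1
  have hmono : Monotone (fun s => C * s - ψ s) := by
    apply monotone_of_deriv_nonneg
    · exact fun s => ((hasDerivAt_id s).const_mul C).sub (hψd s) |>.differentiableAt
    · intro s
      have hd : HasDerivAt (fun s => C * s - ψ s) (C * 1 - v ⬝ᵥ (A (γ s)).mulVec e) s :=
        ((hasDerivAt_id s).const_mul C).sub (hψd s)
      rw [hd.deriv]
      have := hbound s
      linarith
  have hseg : ψ 1 - ψ 0 ≤ C := by
    have h01 := hmono (show (0:ℝ) ≤ 1 by norm_num)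
    simp only [mul_zero, mul_one] at h01
    linarith
  have hγ1 : γ 1 = a := by simp [hγdef, hedef]
  have hγ0 : γ 0 = b := by simp [hγdef]
  have hKterm : e ⬝ᵥ M.mulVec (B.mulVec (K.mulVec e)) = -(ρ / 2) * (z ⬝ᵥ z) := by
    rw [Matrix.dotProduct_mulVec, hvM, hK]
    rw [Matrix.smul_mulVec, Matrix.mulVec_smul, dotProduct_smul]
    rw [← Matrix.mulVec_mulVec, Matrix.dotProduct_mulVec,
      show v ᵥ* B = Bᵀ *ᵥ v from (Matrix.mulVec_transpose B v).symm]
    exact smul_eq_mul ..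
  have hsplit : e ⬝ᵥ M.mulVec (f a - f b + B.mulVec (K.mulVec e))
      = (ψ 1 - ψ 0) + e ⬝ᵥ M.mulVec (B.mulVec (K.mulVec e)) := by
    rw [Matrix.mulVec_add, dotProduct_add, Matrix.mulVec_sub, dotProduct_sub]
    rw [hψdef]
    simp only [hγ1, hγ0]
    rw [Matrix.dotProduct_mulVec, Matrix.dotProduct_mulVec, hvM]
  calc e ⬝ᵥ M.mulVec (f a - f b + B.mulVec (K.mulVec e))
      = (ψ 1 - ψ 0) + e ⬝ᵥ M.mulVec (B.mulVec (K.mulVec e)) := hsplit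
    _ ≤ C + -(ρ / 2) * (z ⬝ᵥ z) := by rw [hKterm]; exact add_le_add_left hseg _
    _ = -lam * (e ⬝ᵥ v) := by rw [hCdef]; ring

/-- Derivative of the quadratic form along a differentiable curve. -/
lemma iss_quad_deriv {n : ℕ} (M : Matrix (Fin n) (Fin n) ℝ) (hMsym : Mᵀ = M)
    (e : ℝ → Fin n → ℝ) (v : Fin n → ℝ) (t : ℝ) (h : HasDerivAt e v t) :
    HasDerivAt (fun t => e t ⬝ᵥ M.mulVec (e t)) (2 * (e t ⬝ᵥ M.mulVec v)) t := by
  have hei : ∀ i, HasDerivAt (fun t => e t i) (v i) t := hasDerivAt_pi.1 h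
  have hinner : ∀ i, HasDerivAt (fun t => ∑ j, M i j * e t j) (∑ j, M i j * v j) t :=
    fun i => HasDerivAt.fun_sum (fun j _ => (hei j).const_mul (M i j))
  have hsum : HasDerivAt (fun t => ∑ i, e t i * ∑ j, M i j * e t j)
      (∑ i, (v i * ∑ j, M i j * e t j + e t i * ∑ j, M i j * v j)) t :=
    HasDerivAt.fun_sum (fun i _ => (hei i).mul (hinner i))
  have heq : (∑ i, (v i * ∑ j, M i j * e t j + e t i * ∑ j, M i j * v j))
      = 2 * (e t ⬝ᵥ M.mulVec v) := by
    rw [Finset.sum_add_distrib]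
    have h1 : ∑ i, v i * ∑ j, M i j * e t j = v ⬝ᵥ M.mulVec (e t) := rfl
    have h2 : ∑ i, e t i * ∑ j, M i j * v j = e t ⬝ᵥ M.mulVec v := rfl
    rw [h1, h2]
    have h3 : v ⬝ᵥ M.mulVec (e t) = e t ⬝ᵥ M.mulVec v := by
      rw [Matrix.dotProduct_mulVec,
        show v ᵥ* M = Mᵀ *ᵥ v from (Matrix.mulVec_transpose M v).symm, hMsym,
        dotProduct_comm]
    rw [h3]; ring
  have : (fun t => e t ⬝ᵥ M.mulVec (e t)) = fun t => ∑ i, e t i * ∑ j, M i j * e t j := rfl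
  rw [this, ← heq]
  exact hsum

set_option maxHeartbeats 2000000 in
/-- Input-to-state stability of the constant-metric closed loop: with the CCM feedback
`K = -(ρ/2)BᵀW⁻¹` and metric `M = W⁻¹`, the Riemannian distance
`V(t) = √((x-x⋆)ᵀM(x-x⋆))` satisfies
`V(t) ≤ e^{-λt}V(0) + ∫₀ᵗ e^{-λ(t-s)}√(w(s)ᵀMw(s)) ds`. -/
theorem iss_closed_loop_constant_metric {n m : ℕ}
    (f : (Fin n → ℝ) → (Fin n → ℝ))
    (A : (Fin n → ℝ) → Matrix (Fin n) (Fin n) ℝ)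
    (hf : ∀ x : Fin n → ℝ,
      HasFDerivAt f ((Matrix.toLin' (A x)).toContinuousLinearMap) x)
    (hA : Continuous A)
    (B : Matrix (Fin n) (Fin m) ℝ)
    (W : Matrix (Fin n) (Fin n) ℝ) (hW : W.PosDef)
    (lam ρ : ℝ) (hlam : 0 < lam) (hρ : 0 ≤ ρ)
    (hLMI : ∀ x : Fin n → ℝ,
      ((-(2 * lam)) • W - (W * (A x)ᵀ + A x * W - ρ • (B * Bᵀ))).PosSemidef)
    (K : Matrix (Fin m) (Fin n) ℝ) (hK : K = (-(ρ / 2)) • (Bᵀ * W⁻¹))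
    (M : Matrix (Fin n) (Fin n) ℝ) (hM : M = W⁻¹)
    (ustar : ℝ → (Fin m → ℝ)) (hustar : Continuous ustar)
    (w : ℝ → (Fin n → ℝ)) (hw : Continuous w)
    (xstar x : ℝ → (Fin n → ℝ))
    (hxstar : ∀ t : ℝ, 0 ≤ t →
      HasDerivAt xstar (f (xstar t) + B.mulVec (ustar t)) t)
    (hx : ∀ t : ℝ, 0 ≤ t →
      HasDerivAt x
        (f (x t) + B.mulVec (ustar t + K.mulVec (x t - xstar t)) + w t) t) :
    ∀ t : ℝ, 0 ≤ t →
      Real.sqrt ((x t - xstar t) ⬝ᵥ M.mulVec (x t - xstar t)) ≤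
        Real.exp (-lam * t) * Real.sqrt ((x 0 - xstar 0) ⬝ᵥ M.mulVec (x 0 - xstar 0)) +
          ∫ s in (0:ℝ)..t, Real.exp (-lam * (t - s)) * Real.sqrt (w s ⬝ᵥ M.mulVec (w s)) := by
  subst hM
  intro T hT
  set M := W⁻¹ with hMdef
  have hWsym : Wᵀ = W := hW.1
  have hMsym : Mᵀ = M := by rw [hMdef, Matrix.transpose_nonsing_inv, hWsym]
  have hMpd : M.PosDef := hW.inv
  have hMpsd : M.PosSemidef := hMpd.posSemidef
  set e : ℝ → Fin n → ℝ := fun t => x t - xstar t with hedef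
  set q : ℝ → ℝ := fun t => e t ⬝ᵥ M.mulVec (e t) with hqdef
  set g : ℝ → ℝ := fun s => Real.sqrt (w s ⬝ᵥ M.mulVec (w s)) with hgdef
  have hqnonneg : ∀ t, 0 ≤ q t := by
    intro t
    have := hMpsd.dotProduct_mulVec_nonneg (e t)
    simpa using this
  have hgnonneg : ∀ s, 0 ≤ g s := fun s => Real.sqrt_nonneg _
  have hgcont : Continuous g :=
    (hw.dotProduct (continuous_const.matrix_mulVec hw)).sqrt
  set D : ℝ → Fin n → ℝ :=
    fun t => f (x t) - f (xstar t) + B.mulVec (K.mulVec (e t)) + w t with hDdef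
  have heD : ∀ t, 0 ≤ t → HasDerivAt e (D t) t := by
    intro t ht
    have h1 := (hx t ht).sub (hxstar t ht)
    have h2 : (f (x t) + B.mulVec (ustar t + K.mulVec (x t - xstar t)) + w t)
        - (f (xstar t) + B.mulVec (ustar t)) = D t := by
      rw [hDdef]
      simp only [hedef]
      rw [Matrix.mulVec_add]
      abel
    rwa [h2] at h1
  have hq' : ∀ t, 0 ≤ t → HasDerivAt q (2 * (e t ⬝ᵥ M.mulVec (D t))) t :=
    fun t ht => iss_quad_deriv M hMsym e (D t) t (heD t ht)
  have hqbound : ∀ t, 0 ≤ t → 2 * (e t ⬝ᵥ M.mulVec (D t)) ≤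
      -(2 * lam) * q t + 2 * Real.sqrt (q t) * g t := by
    intro t ht
    have h1 : e t ⬝ᵥ M.mulVec (f (x t) - f (xstar t) + B.mulVec (K.mulVec (e t)))
        ≤ -lam * q t :=
      iss_contraction_ineq f A hf B W hW lam ρ hLMI K hK (x t) (xstar t)
    have h2 : e t ⬝ᵥ M.mulVec (w t) ≤ Real.sqrt (q t) * g t := iss_psd_cs hMpsd (e t) (w t)
    have hsplitD : e t ⬝ᵥ M.mulVec (D t)
        = e t ⬝ᵥ M.mulVec (f (x t) - f (xstar t) + B.mulVec (K.mulVec (e t)))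
          + e t ⬝ᵥ M.mulVec (w t) := by
      rw [hDdef]
      rw [Matrix.mulVec_add, dotProduct_add]
    rw [hsplitD]; linarith
  -- conclude via an ε-regularization and Grönwall comparison
  refine le_of_forall_pos_le_add ?_
  intro δ hδ
  have hden : 0 < 1 + lam * T := by nlinarith
  set ε : ℝ := δ / (1 + lam * T) with hεdef
  have hε : 0 < ε := div_pos hδ hden
  set Veps : ℝ → ℝ := fun t => Real.sqrt (q t + ε ^ 2) with hVdef
  have hqpos : ∀ t, 0 < q t + ε ^ 2 := fun t => by nlinarith [hqnonneg t]
  have hVpos : ∀ t, 0 < Veps t := fun t => Real.sqrt_pos.2 (hqpos t)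
  have hVsq : ∀ t, Veps t ^ 2 = q t + ε ^ 2 := fun t => Real.sq_sqrt (hqpos t).le
  have hVge : ∀ t, ε ≤ Veps t := by
    intro t
    calc ε = Real.sqrt (ε ^ 2) := (Real.sqrt_sq hε.le).symm
      _ ≤ Veps t := Real.sqrt_le_sqrt (by nlinarith [hqnonneg t])
  have hsqrtle : ∀ t, Real.sqrt (q t) ≤ Veps t :=
    fun t => Real.sqrt_le_sqrt (by nlinarith)
  have hV' : ∀ t, 0 ≤ t →
      HasDerivAt Veps ((2 * (e t ⬝ᵥ M.mulVec (D t))) / (2 * Real.sqrt (q t + ε ^ 2))) t := by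
    intro t ht
    exact ((hq' t ht).add_const (ε ^ 2)).sqrt (ne_of_gt (hqpos t))
  set u : ℝ → ℝ := fun t => Real.exp (lam * t) * Veps t with hudef
  have hexp' : ∀ t : ℝ, HasDerivAt (fun t => Real.exp (lam * t)) (lam * Real.exp (lam * t)) t := by
    intro t
    have := ((hasDerivAt_id t).const_mul lam).exp
    simpa [mul_comm] using this
  have hu' : ∀ t, 0 ≤ t → HasDerivAt u
      (lam * Real.exp (lam * t) * Veps t +
        Real.exp (lam * t) * ((2 * (e t ⬝ᵥ M.mulVec (D t))) / (2 * Real.sqrt (q t + ε ^ 2)))) t :=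
    fun t ht => (hexp' t).mul (hV' t ht)
  have hkey : ∀ t, 0 ≤ t →
      lam * Real.exp (lam * t) * Veps t +
        Real.exp (lam * t) * ((2 * (e t ⬝ᵥ M.mulVec (D t))) / (2 * Real.sqrt (q t + ε ^ 2)))
      ≤ Real.exp (lam * t) * (g t + lam * ε) := by
    intro t ht
    have hVp := hVpos t
    have hq2 := hqbound t ht
    have hVs : Real.sqrt (q t + ε ^ 2) = Veps t := rfl
    have hdiv : (2 * (e t ⬝ᵥ M.mulVec (D t))) / (2 * Real.sqrt (q t + ε ^ 2))
        ≤ g t + lam * ε - lam * Veps t := by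
      rw [hVs, div_le_iff₀ (by positivity)]
      have h1 : Real.sqrt (q t) * g t ≤ Veps t * g t :=
        mul_le_mul_of_nonneg_right (hsqrtle t) (hgnonneg t)
      have h2 : q t = Veps t ^ 2 - ε ^ 2 := by rw [hVsq]; ring
      nlinarith [hVge t, hgnonneg t, hlam.le, Real.sqrt_nonneg (q t), hε.le,
        mul_le_mul_of_nonneg_left (hVge t) (mul_nonneg hlam.le hε.le)]
    have hep : (0:ℝ) ≤ Real.exp (lam * t) := (Real.exp_pos _).le
    nlinarith [mul_le_mul_of_nonneg_left hdiv hep]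
  set G : ℝ → ℝ := fun t => ∫ s in (0:ℝ)..t, Real.exp (lam * s) * (g s + lam * ε) with hGdef
  have hφcont : Continuous (fun s => Real.exp (lam * s) * (g s + lam * ε)) :=
    (Real.continuous_exp.comp (continuous_const.mul continuous_id)).mul
      (hgcont.add continuous_const)
  have hG' : ∀ t : ℝ, HasDerivAt G (Real.exp (lam * t) * (g t + lam * ε)) t :=
    fun t => (hφcont.integral_hasStrictDerivAt 0 t).hasDerivAt
  have hmono : MonotoneOn (fun t => G t - u t) (Set.Icc 0 T) := by
    apply monotoneOn_of_deriv_nonneg (convex_Icc 0 T)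
    · intro t ht
      exact ((hG' t).sub (hu' t ht.1)).continuousAt.continuousWithinAt
    · intro t ht
      rw [interior_Icc] at ht
      exact ((hG' t).sub (hu' t ht.1.le)).differentiableAt.differentiableWithinAt
    · intro t ht
      rw [interior_Icc] at ht
      have hd : HasDerivAt (fun t => G t - u t) _ t := (hG' t).sub (hu' t ht.1.le)
      rw [hd.deriv]
      have := hkey t ht.1.le
      linarith
  have hcomp := hmono (Set.left_mem_Icc.2 hT) (Set.right_mem_Icc.2 hT) hT
  have hG0 : G 0 = 0 := by simp [hGdef]
  have hu0eq : u 0 = Veps 0 := by simp [hudef]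
  have huT : Real.exp (lam * T) * Veps T ≤ u 0 + G T := by
    simp only at hcomp
    rw [hG0] at hcomp
    have : Real.exp (lam * T) * Veps T = u T := rfl
    rw [this]
    linarith
  -- split G T
  have hint1 : IntervalIntegrable (fun s => Real.exp (lam * s) * g s) MeasureTheory.volume 0 T :=
    ((Real.continuous_exp.comp (continuous_const.mul continuous_id)).mul hgcont).intervalIntegrable 0 T
  have hint2 : IntervalIntegrable (fun s => Real.exp (lam * s) * (lam * ε))
      MeasureTheory.volume 0 T :=
    ((Real.continuous_exp.comp (continuous_const.mul continuous_id)).mul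
      continuous_const).intervalIntegrable 0 T
  have hsplitG : G T = (∫ s in (0:ℝ)..T, Real.exp (lam * s) * g s)
      + ∫ s in (0:ℝ)..T, Real.exp (lam * s) * (lam * ε) := by
    have hGT : G T = ∫ s in (0:ℝ)..T, Real.exp (lam * s) * (g s + lam * ε) := rfl
    rw [hGT, ← intervalIntegral.integral_add hint1 hint2]
    apply intervalIntegral.integral_congr
    intro s _
    show Real.exp (lam * s) * (g s + lam * ε)
      = Real.exp (lam * s) * g s + Real.exp (lam * s) * (lam * ε)
    ring
  have hI2 : (∫ s in (0:ℝ)..T, Real.exp (lam * s) * (lam * ε))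
      ≤ T * (Real.exp (lam * T) * (lam * ε)) := by
    have hconst : (∫ _s in (0:ℝ)..T, (Real.exp (lam * T) * (lam * ε)))
        = T * (Real.exp (lam * T) * (lam * ε)) := by
      rw [intervalIntegral.integral_const, smul_eq_mul, sub_zero]
    calc (∫ s in (0:ℝ)..T, Real.exp (lam * s) * (lam * ε))
        ≤ ∫ _s in (0:ℝ)..T, (Real.exp (lam * T) * (lam * ε)) :=
          intervalIntegral.integral_mono_on hT hint2
            (intervalIntegrable_const (c := Real.exp (lam * T) * (lam * ε)))
            (fun s hs => mul_le_mul_of_nonneg_right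
              (Real.exp_le_exp.2 (mul_le_mul_of_nonneg_left hs.2 hlam.le)) (by positivity))
      _ = T * (Real.exp (lam * T) * (lam * ε)) := hconst
  have hJ : Real.exp (-(lam * T)) * (∫ s in (0:ℝ)..T, Real.exp (lam * s) * g s)
      = ∫ s in (0:ℝ)..T, Real.exp (-lam * (T - s)) * g s := by
    rw [← intervalIntegral.integral_const_mul]
    apply intervalIntegral.integral_congr
    intro s _
    show Real.exp (-(lam * T)) * (Real.exp (lam * s) * g s) = Real.exp (-lam * (T - s)) * g s
    rw [← mul_assoc, ← Real.exp_add]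
    congr 2
    ring
  have hVT : Real.sqrt (q T) ≤ Veps T := hsqrtle T
  have hexpT : (0:ℝ) < Real.exp (lam * T) := Real.exp_pos _
  have hexpinv : Real.exp (-(lam * T)) * Real.exp (lam * T) = 1 := by
    rw [← Real.exp_add]; simp
  have hexple1 : Real.exp (-(lam * T)) ≤ 1 :=
    Real.exp_le_one_iff.2 (by nlinarith)
  have hexpneg : (0:ℝ) ≤ Real.exp (-(lam * T)) := (Real.exp_pos _).le
  have hstep : Veps T ≤ Real.exp (-(lam * T)) * (u 0 + G T) := by
    have h := mul_le_mul_of_nonneg_left huT hexpneg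
    calc Veps T = (Real.exp (-(lam * T)) * Real.exp (lam * T)) * Veps T := by
          rw [hexpinv]; ring
      _ = Real.exp (-(lam * T)) * (Real.exp (lam * T) * Veps T) := by ring
      _ ≤ Real.exp (-(lam * T)) * (u 0 + G T) := h
  have hu0 : u 0 ≤ Real.sqrt (q 0) + ε := by
    rw [hu0eq]
    calc Veps 0 = Real.sqrt (q 0 + ε ^ 2) := rfl
      _ ≤ Real.sqrt ((Real.sqrt (q 0) + ε) ^ 2) :=
          Real.sqrt_le_sqrt (by nlinarith [Real.sq_sqrt (hqnonneg 0), Real.sqrt_nonneg (q 0)])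
      _ = Real.sqrt (q 0) + ε := Real.sqrt_sq (by positivity)
  -- assemble everything
  have hmain : Real.sqrt (q T) ≤ Real.exp (-(lam * T)) * Real.sqrt (q 0)
      + (∫ s in (0:ℝ)..T, Real.exp (-lam * (T - s)) * g s) + ε * (1 + lam * T) := by
    have hA1 : Real.exp (-(lam * T)) * u 0 ≤ Real.exp (-(lam * T)) * (Real.sqrt (q 0) + ε) :=
      mul_le_mul_of_nonneg_left hu0 hexpneg
    have hA2 : Real.exp (-(lam * T)) * (∫ s in (0:ℝ)..T, Real.exp (lam * s) * (lam * ε))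
        ≤ Real.exp (-(lam * T)) * (T * (Real.exp (lam * T) * (lam * ε))) :=
      mul_le_mul_of_nonneg_left hI2 hexpneg
    have hA3 : Real.exp (-(lam * T)) * (T * (Real.exp (lam * T) * (lam * ε)))
        = lam * ε * T := by
      have : Real.exp (-(lam * T)) * (T * (Real.exp (lam * T) * (lam * ε)))
          = (Real.exp (-(lam * T)) * Real.exp (lam * T)) * (T * (lam * ε)) := by ring
      rw [this, hexpinv]; ring
    have hA4 : Real.exp (-(lam * T)) * (Real.sqrt (q 0) + ε)
        ≤ Real.exp (-(lam * T)) * Real.sqrt (q 0) + ε := by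
      have : Real.exp (-(lam * T)) * ε ≤ 1 * ε :=
        mul_le_mul_of_nonneg_right hexple1 hε.le
      nlinarith
    have hGdecomp : Real.exp (-(lam * T)) * (u 0 + G T)
        = Real.exp (-(lam * T)) * u 0
          + (∫ s in (0:ℝ)..T, Real.exp (-lam * (T - s)) * g s)
          + Real.exp (-(lam * T)) * (∫ s in (0:ℝ)..T, Real.exp (lam * s) * (lam * ε)) := by
      rw [hsplitG, ← hJ]; ring
    calc Real.sqrt (q T) ≤ Veps T := hVT
      _ ≤ Real.exp (-(lam * T)) * (u 0 + G T) := hstep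
      _ = Real.exp (-(lam * T)) * u 0
          + (∫ s in (0:ℝ)..T, Real.exp (-lam * (T - s)) * g s)
          + Real.exp (-(lam * T)) * (∫ s in (0:ℝ)..T, Real.exp (lam * s) * (lam * ε)) :=
        hGdecomp
      _ ≤ Real.exp (-(lam * T)) * Real.sqrt (q 0)
          + (∫ s in (0:ℝ)..T, Real.exp (-lam * (T - s)) * g s) + ε * (1 + lam * T) := by
        have := hA1.trans hA4
        rw [hA3] at hA2
        have hεT : ε + lam * ε * T = ε * (1 + lam * T) := by ring
        linarith
  have hδeq : ε * (1 + lam * T) = δ := by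
    rw [hεdef]; field_simp
  rw [show -lam * T = -(lam * T) by ring]
  rw [← hδeq]
  exact hmain
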